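/- Let β > 1, B₀ > 0, ω ≥ 0 and let g : (0,∞) → ℝ be a measurable function with 0 ≤ g(r) ≤ B₀·(1 + √B₀·r)^{−2β} for all r > 0. Define ψ_k(r) = √(B₀/Γ(k+1))·(B₀/2)^{k/2}·r^k·exp(−B₀r²/4) and λ_k = 2kω·∫₀^∞ ψ_k(r)²·(∫_r^∞ g(s)·s ds)·r^{−1} dr. Then for every integer k ≥ 1 with k > β−1: λ_k ≤ ω·B₀·Γ(k+1−β)/((β−1)·Γ(k)), where Γ is the Gamma function. -/

import Mathlib

open Real MeasureTheory

private lemma gauss_moment {a b : ℝ} (ha : 0 < a) (hb : 0 < b) :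
    ∫ x in Set.Ioi (0:ℝ), x ^ (2*a-1) * Real.exp (-b * x^2)
      = (1/b) ^ a * Real.Gamma a / 2 := by
  have h := MeasureTheory.integral_comp_rpow_Ioi_of_pos
    (g := fun t : ℝ => t ^ (a-1) * Real.exp (-(b*t))) (p := (2:ℝ)) two_pos
  rw [integral_rpow_mul_exp_neg_mul_Ioi ha hb] at h
  have heq : Set.EqOn
      (fun x : ℝ => ((2:ℝ) * x ^ ((2:ℝ)-1)) • ((x ^ (2:ℝ)) ^ (a-1) * Real.exp (-(b * x ^ (2:ℝ)))))
      (fun x : ℝ => 2 * (x ^ (2*a-1) * Real.exp (-b * x^2))) (Set.Ioi 0) := by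
    intro x hx
    have hx0 : (0:ℝ) < x := hx
    have h2 : x ^ (2:ℝ) = x ^ 2 := by
      rw [show (2:ℝ) = ((2:ℕ):ℝ) by norm_num, Real.rpow_natCast]
    simp only [smul_eq_mul]
    rw [show (2:ℝ)-1 = (1:ℝ) by norm_num, Real.rpow_one, ← Real.rpow_mul hx0.le, h2,
      show 2*a-1 = 1+2*(a-1) by ring, Real.rpow_add hx0, Real.rpow_one, neg_mul]
    ring
  rw [MeasureTheory.setIntegral_congr_fun measurableSet_Ioi heq,
    MeasureTheory.integral_const_mul] at h
  linarith

/-- Large-`k` estimate from the proof of Theorem 7.3 (thm-power): for a power-decaying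
perturbation `0 ≤ g(r) ≤ B₀(1+√B₀ r)^{−2β}` and integers `k ≥ 1` with `k > β−1`,
`λ_k ≤ ωB₀Γ(k+1−β)/((β−1)Γ(k))`. -/
theorem power_decay_lambda_k_large_k
    (β B₀ ω : ℝ) (hβ : 1 < β) (hB₀ : 0 < B₀) (hω : 0 ≤ ω)
    (g : ℝ → ℝ) (hgmeas : Measurable g)
    (hg : ∀ r : ℝ, 0 < r →
      0 ≤ g r ∧ g r ≤ B₀ * (1 + Real.sqrt B₀ * r) ^ (-(2 * β)))
    (ψ : ℕ → ℝ → ℝ)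
    (hψ : ∀ (k : ℕ) (r : ℝ), ψ k r = Real.sqrt (B₀ / Real.Gamma ((k : ℝ) + 1))
        * (B₀ / 2) ^ ((k : ℝ) / 2) * r ^ k * Real.exp (-B₀ * r ^ 2 / 4))
    (lam : ℕ → ℝ)
    (hlam : ∀ k : ℕ, lam k = 2 * k * ω
        * ∫ r in Set.Ioi (0 : ℝ), ψ k r ^ 2 * (∫ s in Set.Ioi r, g s * s) * r⁻¹) :
    ∀ k : ℕ, 1 ≤ k → β - 1 < (k : ℝ) →
      lam k ≤ ω * B₀ * Real.Gamma ((k : ℝ) + 1 - β) / ((β - 1) * Real.Gamma (k : ℝ)) := by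
  intro k hk1 hkβ
  set K : ℝ := (k : ℝ) with hK
  have hK1 : (1:ℝ) ≤ K := by rw [hK]; exact_mod_cast hk1
  have hK0 : 0 < K := by linarith
  have hβ1 : 0 < β - 1 := by linarith
  set sb := Real.sqrt B₀ with hsbdef
  have hsb : 0 < sb := Real.sqrt_pos.mpr hB₀
  have hsb2 : sb ^ 2 = B₀ := Real.sq_sqrt hB₀.le
  set b := B₀ / 2 with hbdef
  have hb : 0 < b := by rw [hbdef]; linarith
  set a := K + 1 - β with hadef
  have ha : 0 < a := by rw [hadef]; linarith
  have hΓK : 0 < Real.Gamma K := Real.Gamma_pos_of_pos hK0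
  have hΓK1 : Real.Gamma (K + 1) = K * Real.Gamma K := Real.Gamma_add_one hK0.ne'
  have hΓK1pos : 0 < Real.Gamma (K + 1) := by rw [hΓK1]; positivity
  have hΓa : 0 < Real.Gamma a := Real.Gamma_pos_of_pos ha
  set C := B₀ ^ ((1:ℝ)-β) / (2*(β-1)) with hCdef
  have hC : 0 < C := by
    apply div_pos (Real.rpow_pos_of_pos hB₀ _) (by linarith)
  -- inner integral: nonnegativity
  have inner_nonneg : ∀ r : ℝ, 0 < r → 0 ≤ ∫ s in Set.Ioi r, g s * s := by
    intro r hr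
    apply setIntegral_nonneg measurableSet_Ioi
    intro s hs
    have hs0 : 0 < s := hr.trans hs
    exact mul_nonneg (hg s hs0).1 hs0.le
  -- inner integral: bound
  have inner_le : ∀ r : ℝ, 0 < r → (∫ s in Set.Ioi r, g s * s) ≤ C * r ^ (2-2*β) := by
    intro r hr
    set F : ℝ → ℝ := fun s => (1 + sb*s) ^ (2-2*β) / (2-2*β) with hF
    set u : ℝ → ℝ := fun s => sb * (1 + sb*s) ^ (1-2*β) with hu
    have hne : (2-2*β) ≠ 0 := by linarith
    have hder : ∀ s ∈ Set.Ici r, HasDerivAt F (u s) s := by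
      intro s hs
      have hs0 : 0 < s := lt_of_lt_of_le hr hs
      have hbase : 0 < 1 + sb * s := by positivity
      have h1 : HasDerivAt (fun s : ℝ => 1 + sb * s) sb s := by
        simpa using ((hasDerivAt_id s).const_mul sb).const_add 1
      have h2 := (Real.hasDerivAt_rpow_const (x := 1 + sb*s) (p := 2-2*β)
        (Or.inl hbase.ne')).comp s h1
      have h3 := h2.div_const (2-2*β)
      have hval : (2-2*β) * (1 + sb*s) ^ (2-2*β-1) * sb / (2-2*β) = u s := by
        rw [show 2-2*β-1 = 1-2*β by ring, hu]
        field_simp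
        linear_combination mul_inv_cancel₀ (show (1:ℝ) - β ≠ 0 by linarith)
      rw [← hval]
      exact h3
    have u_nonneg : ∀ s ∈ Set.Ioi r, 0 ≤ u s := by
      intro s hs
      have hs0 : 0 < s := hr.trans hs
      have hbase : (0:ℝ) ≤ 1 + sb * s := by positivity
      exact mul_nonneg hsb.le (Real.rpow_nonneg hbase _)
    have hFtend : Filter.Tendsto F Filter.atTop (nhds 0) := by
      have htop : Filter.Tendsto (fun s : ℝ => 1 + sb*s) Filter.atTop Filter.atTop :=
        Filter.tendsto_atTop_add_const_left _ 1
          (Filter.Tendsto.const_mul_atTop hsb Filter.tendsto_id)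
      have h0 : Filter.Tendsto (fun x : ℝ => x ^ (2-2*β)) Filter.atTop (nhds 0) := by
        have := tendsto_rpow_neg_atTop (y := 2*β-2) (by linarith)
        simpa [show -(2*β-2) = 2-2*β by ring] using this
      have := (h0.comp htop).div_const (2-2*β)
      simpa [hF, Function.comp] using this
    have hint : ∫ s in Set.Ioi r, u s = 0 - F r :=
      integral_Ioi_of_hasDerivAt_of_nonneg' hder u_nonneg hFtend
    have huint : IntegrableOn u (Set.Ioi r) :=
      integrableOn_Ioi_deriv_of_nonneg' hder u_nonneg hFtend
    have hmono : (∫ s in Set.Ioi r, g s * s) ≤ ∫ s in Set.Ioi r, u s := by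
      apply integral_mono_of_nonneg
      · rw [Filter.EventuallyLE, ae_restrict_iff' measurableSet_Ioi]
        refine Filter.Eventually.of_forall fun s hs => ?_
        have hs0 : 0 < s := hr.trans hs
        simpa using mul_nonneg (hg s hs0).1 hs0.le
      · exact huint
      · rw [Filter.EventuallyLE, ae_restrict_iff' measurableSet_Ioi]
        refine Filter.Eventually.of_forall fun s hs => ?_
        have hs0 : 0 < s := hr.trans hs
        have hbase : 0 < 1 + sb * s := by positivity
        have hgb := (hg s hs0).2
        have h1 : g s * s ≤ B₀ * (1 + sb * s) ^ (-(2*β)) * s :=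
          mul_le_mul_of_nonneg_right hgb hs0.le
        refine h1.trans ?_
        have hXn : (0:ℝ) ≤ (1 + sb*s) ^ (-(2*β)) := Real.rpow_nonneg hbase.le _
        have hsplit : (1 + sb*s) ^ (1-2*β) = (1 + sb*s) ^ (-(2*β)) * (1 + sb*s) := by
          rw [show 1-2*β = -(2*β)+1 by ring, Real.rpow_add hbase, Real.rpow_one]
        show B₀ * (1 + sb * s) ^ (-(2*β)) * s ≤ u s
        simp only [hu]
        rw [hsplit, ← hsb2]
        have hsbs : sb * s ≤ 1 + sb * s := by linarith
        nlinarith [mul_nonneg (mul_nonneg hsb.le hXn) (sub_nonneg.2 hsbs),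
          mul_nonneg hXn hs0.le]
    have hFr : 0 - F r = (1 + sb*r) ^ (2-2*β) / (2*(β-1)) := by
      rw [hF]
      beta_reduce
      generalize (1 + sb*r) ^ (2-2*β) = X
      field_simp
      linear_combination X * mul_inv_cancel₀ (show (1:ℝ) - β ≠ 0 by linarith)
    have hle2 : (1 + sb*r) ^ (2-2*β) ≤ (sb*r) ^ (2-2*β) :=
      Real.rpow_le_rpow_of_nonpos (by positivity) (by linarith) (by linarith)
    have hsbr : (sb*r) ^ (2-2*β) = B₀ ^ ((1:ℝ)-β) * r ^ (2-2*β) := by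
      rw [Real.mul_rpow hsb.le hr.le]
      congr 1
      rw [hsbdef, Real.sqrt_eq_rpow, ← Real.rpow_mul hB₀.le]
      congr 1
      ring
    calc (∫ s in Set.Ioi r, g s * s) ≤ ∫ s in Set.Ioi r, u s := hmono
      _ = 0 - F r := hint
      _ = (1 + sb*r) ^ (2-2*β) / (2*(β-1)) := hFr
      _ ≤ (sb*r) ^ (2-2*β) / (2*(β-1)) := by
          apply div_le_div_of_nonneg_right ?_ (by linarith)
          exact hle2
      _ = C * r ^ (2-2*β) := by rw [hsbr, hCdef]; ring
  -- square of the ground state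
  have hψsq : ∀ r : ℝ, ψ k r ^ 2
      = (B₀ / Real.Gamma (K+1)) * b ^ K * r ^ (2*k) * Real.exp (-b * r^2) := by
    intro r
    rw [hψ]
    rw [mul_pow, mul_pow, mul_pow]
    rw [Real.sq_sqrt (le_of_lt (div_pos hB₀ hΓK1pos))]
    congr 1
    · congr 1
      · rw [← Real.rpow_natCast ((B₀/2) ^ (K/2)) 2, ← Real.rpow_mul hb.le]
        norm_num
      · rw [← pow_mul, mul_comm k 2]
    · rw [pow_two, ← Real.exp_add]
      congr 1
      rw [hbdef]
      ring
  set D := (B₀ / Real.Gamma (K+1)) * b ^ K * C with hDdef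
  have hD : 0 ≤ D := by positivity
  -- outer integral bound
  have houter : (∫ r in Set.Ioi (0:ℝ), ψ k r ^ 2 * (∫ s in Set.Ioi r, g s * s) * r⁻¹)
      ≤ D * ((1/b) ^ a * Real.Gamma a / 2) := by
    have hintb : IntegrableOn (fun r : ℝ => r ^ (2*a-1) * Real.exp (-b * r^2)) (Set.Ioi 0) :=
      integrableOn_rpow_mul_exp_neg_mul_sq hb (by linarith)
    have hintD : IntegrableOn (fun r : ℝ => D * (r ^ (2*a-1) * Real.exp (-b * r^2)))
        (Set.Ioi 0) := hintb.const_mul D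
    have hle : (∫ r in Set.Ioi (0:ℝ), ψ k r ^ 2 * (∫ s in Set.Ioi r, g s * s) * r⁻¹)
        ≤ ∫ r in Set.Ioi (0:ℝ), D * (r ^ (2*a-1) * Real.exp (-b * r^2)) := by
      apply integral_mono_of_nonneg
      · rw [Filter.EventuallyLE, ae_restrict_iff' measurableSet_Ioi]
        refine Filter.Eventually.of_forall fun r hr => ?_
        have hr0 : (0:ℝ) < r := hr
        simpa using mul_nonneg (mul_nonneg (sq_nonneg _) (inner_nonneg r hr0))
          (inv_nonneg.2 hr0.le)
      · exact hintD
      · rw [Filter.EventuallyLE, ae_restrict_iff' measurableSet_Ioi]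
        refine Filter.Eventually.of_forall fun r hr => ?_
        have hr0 : (0:ℝ) < r := hr
        have h1 : ψ k r ^ 2 * (∫ s in Set.Ioi r, g s * s) * r⁻¹
            ≤ ψ k r ^ 2 * (C * r ^ (2-2*β)) * r⁻¹ :=
          mul_le_mul_of_nonneg_right
            (mul_le_mul_of_nonneg_left (inner_le r hr0) (sq_nonneg _)) (inv_nonneg.2 hr0.le)
        refine h1.trans_eq ?_
        rw [hψsq]
        have hr2k : (r:ℝ) ^ (2*k) = r ^ ((2*K) : ℝ) := by
          rw [hK, ← Real.rpow_natCast r (2*k)]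
          push_cast
          ring_nf
        have hcomb : r ^ ((2*K):ℝ) * r ^ (2-2*β) * r ^ (-1:ℝ) = r ^ (2*a-1) := by
          rw [← Real.rpow_add hr0, ← Real.rpow_add hr0]
          congr 1
          rw [hadef]
          ring
        rw [hr2k, show r⁻¹ = r ^ (-1:ℝ) from (Real.rpow_neg_one r).symm, hDdef, ← hcomb]
        ring
    refine hle.trans_eq ?_
    rw [MeasureTheory.integral_const_mul, gauss_moment ha hb]
  -- constant algebra
  have e1 : ((1:ℝ)/b) ^ a = b ^ (-a) := by
    rw [one_div, Real.inv_rpow hb.le, ← Real.rpow_neg hb.le]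
  have e2 : b ^ K * b ^ (-a) = b ^ (β-1) := by
    rw [← Real.rpow_add hb]
    congr 1
    rw [hadef]
    ring
  have e3 : b ^ (β-1) = B₀ ^ (β-1) * (2:ℝ) ^ ((1:ℝ)-β) := by
    rw [hbdef, div_eq_mul_inv, Real.mul_rpow hB₀.le (by norm_num),
      Real.inv_rpow (by norm_num : (0:ℝ) ≤ 2), ← Real.rpow_neg (by norm_num : (0:ℝ) ≤ 2)]
    congr 2
    ring
  have e4 : B₀ ^ ((1:ℝ)-β) * B₀ ^ (β-1) = 1 := by
    rw [← Real.rpow_add hB₀]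
    norm_num
  have e5 : (2:ℝ) ^ ((1:ℝ)-β) = 2 * (2:ℝ) ^ (-β) := by
    rw [show (1:ℝ)-β = 1 + -β by ring, Real.rpow_add (by norm_num), Real.rpow_one]
  have hDval : K * D * ((1:ℝ)/b) ^ a = B₀ * (2:ℝ) ^ (-β) / ((β-1) * Real.Gamma K) := by
    rw [e1, hDdef, hCdef]
    have step1 : K * (B₀ / Real.Gamma (K + 1) * b ^ K * (B₀ ^ ((1:ℝ) - β) / (2 * (β - 1))))
        * b ^ (-a)
        = (b ^ K * b ^ (-a)) * (B₀ ^ ((1:ℝ)-β)) * (K / Real.Gamma (K+1)) * B₀ / (2*(β-1)) := by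
      ring
    rw [step1, e2, e3, hΓK1]
    have step2 : B₀ ^ (β-1) * (2:ℝ) ^ ((1:ℝ)-β) * B₀ ^ ((1:ℝ)-β)
        = (B₀ ^ ((1:ℝ)-β) * B₀ ^ (β-1)) * (2:ℝ) ^ ((1:ℝ)-β) := by ring
    rw [step2, e4, e5]
    field_simp
  have h2β : (2:ℝ) ^ (-β) ≤ 1 :=
    Real.rpow_le_one_of_one_le_of_nonpos (by norm_num) (by linarith)
  -- put it together
  rw [hlam k, ← hK]
  have hfinal1 : 2 * K * ω * (∫ r in Set.Ioi (0:ℝ),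
        ψ k r ^ 2 * (∫ s in Set.Ioi r, g s * s) * r⁻¹)
      ≤ 2 * K * ω * (D * ((1/b) ^ a * Real.Gamma a / 2)) :=
    mul_le_mul_of_nonneg_left houter (by positivity)
  refine hfinal1.trans ?_
  have hrw : 2 * K * ω * (D * ((1/b) ^ a * Real.Gamma a / 2))
      = ω * (K * D * ((1:ℝ)/b) ^ a) * Real.Gamma a := by ring
  rw [hrw, hDval]
  have hgoal : ω * (B₀ * (2:ℝ) ^ (-β) / ((β-1) * Real.Gamma K)) * Real.Gamma a
      = (ω * B₀ * Real.Gamma a / ((β-1) * Real.Gamma K)) * (2:ℝ) ^ (-β) := by ring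
  rw [hgoal]
  have hend : (ω * B₀ * Real.Gamma a / ((β-1) * Real.Gamma K)) * (2:ℝ) ^ (-β)
      ≤ (ω * B₀ * Real.Gamma a / ((β-1) * Real.Gamma K)) * 1 :=
    mul_le_mul_of_nonneg_left h2β (by positivity)
  rw [mul_one] at hend
  refine hend.trans_eq ?_
  rw [hadef]
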